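/- Let α > 0 and define 𝓛(x) = −3(αx)^{3/2}/(α(1 + (αx)^{3/4})²) for x > 0. Then for every F > 0: (i) 𝓛'(F) = −9√(αF)/(2(1 + (αF)^{3/4})³) < 0; (ii) 𝓛''(F) = 9α(7(αF)^{3/4} − 2)/(8√(αF)(1 + (αF)^{3/4})⁴), and 𝓛''(F) ≥ 0 if and only if αF ≥ (2/7)^{4/3}; (iii) 𝓛'(F) + 2F·𝓛''(F) = 9√(αF)(5(αF)^{3/4} − 4)/(4(1 + (αF)^{3/4})⁴), and this is ≤ 0 if and only if αF ≤ (4/5)^{4/3}. Moreover 𝓛(F) → −3/α as F → +∞. -/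

import Mathlib

open Filter Topology Set

private lemma rpow_quarter {t : ℝ} (ht : 0 < t) (n : ℕ) :
    (t ^ ((1:ℝ)/4)) ^ n = t ^ ((n : ℝ)/4) := by
  rw [← Real.rpow_natCast (t ^ ((1:ℝ)/4)) n, ← Real.rpow_mul ht.le]
  congr 1; ring

private lemma hasDerivAt_rpow_aux (α x p : ℝ) (hx : 0 < α * x) :
    HasDerivAt (fun y : ℝ => (α * y) ^ p) (p * (α * x) ^ (p - 1) * α) x := by
  have h1 : HasDerivAt (fun y : ℝ => α * y) α x := by
    simpa using (hasDerivAt_id x).const_mul α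
  have := (Real.hasDerivAt_rpow_const (x := α * x) (p := p) (Or.inl hx.ne')).comp x h1
  exact this

private lemma hasDerivAt_hay1 (α : ℝ) (hα : 0 < α) {x : ℝ} (hx : 0 < x) :
    HasDerivAt (fun y : ℝ => -3 * (α * y) ^ ((3:ℝ)/2) / (α * (1 + (α * y) ^ ((3:ℝ)/4)) ^ 2))
      (-9 * Real.sqrt (α * x) / (2 * (1 + (α * x) ^ ((3:ℝ)/4)) ^ 3)) x := by
  have ht : 0 < α * x := mul_pos hα hx
  have hr : 0 < (α*x) ^ ((1:ℝ)/4) := Real.rpow_pos_of_pos ht _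
  have hN : HasDerivAt (fun y : ℝ => -3 * (α*y)^((3:ℝ)/2))
      (-3 * ((3:ℝ)/2 * (α*x)^((3:ℝ)/2 - 1) * α)) x :=
    (hasDerivAt_rpow_aux α x ((3:ℝ)/2) ht).const_mul (-3)
  have hDi : HasDerivAt (fun y : ℝ => 1 + (α*y)^((3:ℝ)/4))
      ((3:ℝ)/4 * (α*x)^((3:ℝ)/4 - 1) * α) x :=
    (hasDerivAt_rpow_aux α x ((3:ℝ)/4) ht).const_add 1
  have hD : HasDerivAt (fun y : ℝ => α * (1 + (α*y)^((3:ℝ)/4)) ^ 2)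
      (α * (2 * (1 + (α*x)^((3:ℝ)/4)) ^ 1 * ((3:ℝ)/4 * (α*x)^((3:ℝ)/4 - 1) * α))) x :=
    (hDi.pow 2).const_mul α
  have hs : 0 < 1 + (α*x)^((3:ℝ)/4) := by positivity
  have hD0 : α * (1 + (α*x)^((3:ℝ)/4)) ^ 2 ≠ 0 := by positivity
  have key := hN.div hD hD0
  convert key using 1
  case e'_4 => rfl
  case e'_5 => rfl
  case e'_8 => rfl
  set r := (α*x) ^ ((1:ℝ)/4) with hrdef
  have e3 : (α*x)^((3:ℝ)/4) = r^3 := by rw [rpow_quarter ht 3]; norm_num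
  have e6 : (α*x)^((3:ℝ)/2) = r^6 := by rw [rpow_quarter ht 6]; norm_num
  have e2 : (α*x)^((3:ℝ)/2 - 1) = r^2 := by rw [rpow_quarter ht 2]; norm_num
  have em : (α*x)^((3:ℝ)/4 - 1) = r⁻¹ := by
    rw [show (3:ℝ)/4 - 1 = -(1/4) by norm_num, Real.rpow_neg ht.le]
  have esq : Real.sqrt (α*x) = r^2 := by
    rw [Real.sqrt_eq_rpow, rpow_quarter ht 2]; norm_num
  have hs' : 0 < 1 + r^3 := by rw [← e3]; exact hs
  rw [esq, e3, e6, e2, em]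
  field_simp
  ring

private lemma hasDerivAt_hay2 (α : ℝ) (hα : 0 < α) {x : ℝ} (hx : 0 < x) :
    HasDerivAt (fun y : ℝ => -9 * Real.sqrt (α * y) / (2 * (1 + (α * y) ^ ((3:ℝ)/4)) ^ 3))
      (9 * α * (7 * (α * x) ^ ((3:ℝ)/4) - 2) /
        (8 * Real.sqrt (α * x) * (1 + (α * x) ^ ((3:ℝ)/4)) ^ 4)) x := by
  have ht : 0 < α * x := mul_pos hα hx
  have hr : 0 < (α*x) ^ ((1:ℝ)/4) := Real.rpow_pos_of_pos ht _
  have hsq : (fun y : ℝ => -9 * Real.sqrt (α * y) / (2 * (1 + (α * y) ^ ((3:ℝ)/4)) ^ 3))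
      = fun y : ℝ => -9 * (α * y) ^ ((1:ℝ)/2) / (2 * (1 + (α * y) ^ ((3:ℝ)/4)) ^ 3) := by
    funext y; rw [Real.sqrt_eq_rpow]
  rw [hsq]
  have hN : HasDerivAt (fun y : ℝ => -9 * (α*y)^((1:ℝ)/2))
      (-9 * ((1:ℝ)/2 * (α*x)^((1:ℝ)/2 - 1) * α)) x :=
    (hasDerivAt_rpow_aux α x ((1:ℝ)/2) ht).const_mul (-9)
  have hDi : HasDerivAt (fun y : ℝ => 1 + (α*y)^((3:ℝ)/4))
      ((3:ℝ)/4 * (α*x)^((3:ℝ)/4 - 1) * α) x :=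
    (hasDerivAt_rpow_aux α x ((3:ℝ)/4) ht).const_add 1
  have hD : HasDerivAt (fun y : ℝ => 2 * (1 + (α*y)^((3:ℝ)/4)) ^ 3)
      (2 * (3 * (1 + (α*x)^((3:ℝ)/4)) ^ 2 * ((3:ℝ)/4 * (α*x)^((3:ℝ)/4 - 1) * α))) x :=
    (hDi.pow 3).const_mul 2
  have hs : 0 < 1 + (α*x)^((3:ℝ)/4) := by positivity
  have hD0 : 2 * (1 + (α*x)^((3:ℝ)/4)) ^ 3 ≠ 0 := by positivity
  have key := hN.div hD hD0
  convert key using 1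
  case e'_4 => rfl
  case e'_5 => rfl
  case e'_8 => rfl
  set r := (α*x) ^ ((1:ℝ)/4) with hrdef
  have e3 : (α*x)^((3:ℝ)/4) = r^3 := by rw [rpow_quarter ht 3]; norm_num
  have e1 : (α*x)^((1:ℝ)/2) = r^2 := by rw [rpow_quarter ht 2]; norm_num
  have em1 : (α*x)^((1:ℝ)/2 - 1) = (r^2)⁻¹ := by
    rw [show (1:ℝ)/2 - 1 = -(1/2) by norm_num, Real.rpow_neg ht.le, e1]
  have em : (α*x)^((3:ℝ)/4 - 1) = r⁻¹ := by
    rw [show (3:ℝ)/4 - 1 = -(1/4) by norm_num, Real.rpow_neg ht.le]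
  have esq : Real.sqrt (α*x) = r^2 := by
    rw [Real.sqrt_eq_rpow, rpow_quarter ht 2]; norm_num
  have hs' : 0 < 1 + r^3 := by rw [← e3]; exact hs
  rw [esq, e3, e1, em1, em]
  field_simp
  ring

set_option maxHeartbeats 1000000 in
/-- **Causality and unitarity for the Hayward NED Lagrangian.** With
`𝓛(x) = -3(αx)^{3/2}/(α(1 + (αx)^{3/4})²)`, for every `F > 0`:
(i) `𝓛'(F) = -9√(αF)/(2(1 + (αF)^{3/4})³) < 0`;
(ii) `𝓛''(F) = 9α(7(αF)^{3/4} - 2)/(8√(αF)(1 + (αF)^{3/4})⁴)`, and `𝓛''(F) ≥ 0` iff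
`αF ≥ (2/7)^{4/3}`;
(iii) `Φ(F) = 𝓛'(F) + 2F𝓛''(F) = 9√(αF)(5(αF)^{3/4} - 4)/(4(1 + (αF)^{3/4})⁴)`, and
`Φ(F) ≤ 0` iff `αF ≤ (4/5)^{4/3}`. Moreover `𝓛(F) → -3/α` as `F → +∞`. -/
theorem hayward_causality (α : ℝ) (hα : 0 < α)
    (𝓛 : ℝ → ℝ)
    (h𝓛 : ∀ x > (0:ℝ),
      𝓛 x = -3 * (α * x) ^ ((3:ℝ)/2) / (α * (1 + (α * x) ^ ((3:ℝ)/4)) ^ 2)) :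
    (∀ F > (0:ℝ),
      (deriv 𝓛 F = -9 * Real.sqrt (α * F) / (2 * (1 + (α * F) ^ ((3:ℝ)/4)) ^ 3) ∧
        deriv 𝓛 F < 0) ∧
      (deriv (deriv 𝓛) F = 9 * α * (7 * (α * F) ^ ((3:ℝ)/4) - 2) /
          (8 * Real.sqrt (α * F) * (1 + (α * F) ^ ((3:ℝ)/4)) ^ 4) ∧
        (0 ≤ deriv (deriv 𝓛) F ↔ (2/7 : ℝ) ^ ((4:ℝ)/3) ≤ α * F)) ∧
      (deriv 𝓛 F + 2 * F * deriv (deriv 𝓛) F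
          = 9 * Real.sqrt (α * F) * (5 * (α * F) ^ ((3:ℝ)/4) - 4) /
              (4 * (1 + (α * F) ^ ((3:ℝ)/4)) ^ 4) ∧
        (deriv 𝓛 F + 2 * F * deriv (deriv 𝓛) F ≤ 0 ↔ α * F ≤ (4/5 : ℝ) ^ ((4:ℝ)/3)))) ∧
    Tendsto 𝓛 atTop (𝓝 (-3 / α)) := by
  have hd1 : ∀ x > (0:ℝ), deriv 𝓛 x
      = -9 * Real.sqrt (α * x) / (2 * (1 + (α * x) ^ ((3:ℝ)/4)) ^ 3) := by
    intro x hx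
    have hev : 𝓛 =ᶠ[𝓝 x]
        fun y => -3 * (α * y) ^ ((3:ℝ)/2) / (α * (1 + (α * y) ^ ((3:ℝ)/4)) ^ 2) := by
      filter_upwards [Ioi_mem_nhds hx] with y hy using h𝓛 y hy
    rw [hev.deriv_eq, (hasDerivAt_hay1 α hα hx).deriv]
  have hd2 : ∀ x > (0:ℝ), deriv (deriv 𝓛) x
      = 9 * α * (7 * (α * x) ^ ((3:ℝ)/4) - 2) /
          (8 * Real.sqrt (α * x) * (1 + (α * x) ^ ((3:ℝ)/4)) ^ 4) := by
    intro x hx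
    have hev : deriv 𝓛 =ᶠ[𝓝 x]
        fun y => -9 * Real.sqrt (α * y) / (2 * (1 + (α * y) ^ ((3:ℝ)/4)) ^ 3) := by
      filter_upwards [Ioi_mem_nhds hx] with y hy using hd1 y hy
    rw [hev.deriv_eq, (hasDerivAt_hay2 α hα hx).deriv]
  constructor
  · intro F hF
    have ht : 0 < α * F := mul_pos hα hF
    have hr : 0 < (α*F) ^ ((1:ℝ)/4) := Real.rpow_pos_of_pos ht _
    set r := (α*F) ^ ((1:ℝ)/4) with hrdef
    have e3 : (α*F)^((3:ℝ)/4) = r^3 := by rw [rpow_quarter ht 3]; norm_num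
    have esq : Real.sqrt (α*F) = r^2 := by
      rw [Real.sqrt_eq_rpow, rpow_quarter ht 2]; norm_num
    have hs : (0:ℝ) < 1 + r^3 := by positivity
    have hD1 := hd1 F hF
    have hD2 := hd2 F hF
    have hiff : ∀ c : ℝ, 0 < c → ((α*F)^((3:ℝ)/4) ≤ c ↔ α*F ≤ c ^ ((4:ℝ)/3)) := by
      intro c hc
      have h34 : ((4:ℝ)/3)⁻¹ = (3:ℝ)/4 := by norm_num
      rw [← h34]
      exact Real.rpow_inv_le_iff_of_pos ht.le hc.le (by norm_num)
    have hiff' : ∀ c : ℝ, 0 < c → (c ≤ (α*F)^((3:ℝ)/4) ↔ c ^ ((4:ℝ)/3) ≤ α*F) := by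
      intro c hc
      have h34 : ((4:ℝ)/3)⁻¹ = (3:ℝ)/4 := by norm_num
      rw [← h34]
      exact Real.le_rpow_inv_iff_of_pos hc.le ht.le (by norm_num)
    refine ⟨⟨hD1, ?_⟩, ⟨hD2, ?_⟩, ?_, ?_⟩
    · rw [hD1, esq, e3]
      apply div_neg_of_neg_of_pos
      · nlinarith
      · positivity
    · rw [hD2]
      have hden : 0 < 8 * Real.sqrt (α*F) * (1 + (α*F)^((3:ℝ)/4)) ^ 4 := by
        rw [esq, e3]; positivity
      rw [le_div_iff₀ hden, zero_mul, ← hiff' (2/7) (by norm_num), e3]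
      constructor
      · intro h
        nlinarith
      · intro h
        nlinarith
    · rw [hD1, hD2, esq, e3]
      have hFr : F = r^4 / α := by
        field_simp
        rw [mul_comm, rpow_quarter ht 4]
        norm_num
      rw [hFr]
      field_simp
      ring
    · have hFr : F = r^4 / α := by
        field_simp
        rw [mul_comm, rpow_quarter ht 4]
        norm_num
      rw [hD1, hD2, esq, ← hiff (4/5) (by norm_num), e3, hFr]
      have key : -9 * r^2 / (2 * (1 + r^3) ^ 3)
          + 2 * (r^4/α) * (9 * α * (7 * r^3 - 2) / (8 * r^2 * (1 + r^3) ^ 4))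
          = 9 * r^2 * (5 * r^3 - 4) / (4 * (1 + r^3)^4) := by
        field_simp
        ring
      rw [key]
      rw [div_nonpos_iff]
      constructor
      · rintro (⟨h1, h2⟩ | ⟨h1, h2⟩)
        · nlinarith [pow_pos hs 4]
        · nlinarith [mul_pos hr hr]
      · intro h
        right
        constructor
        · nlinarith
        · positivity
  · have hs3 : Tendsto (fun x : ℝ => (α*x)^((3:ℝ)/4)) atTop atTop := by
      apply (tendsto_rpow_atTop (by norm_num : (0:ℝ) < 3/4)).comp
      exact Tendsto.const_mul_atTop hα tendsto_id
    have hu : Tendsto (fun s : ℝ => (1+s)⁻¹) atTop (𝓝 0) := by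
      apply tendsto_inv_atTop_zero.comp
      exact tendsto_atTop_add_const_left _ 1 tendsto_id
    have h2' : Tendsto (fun s : ℝ => -3 * (1 - (1+s)⁻¹)^2 / α) atTop
        (𝓝 (-3 * (1 - 0)^2 / α)) := by
      apply Tendsto.div_const
      exact Tendsto.const_mul _ ((tendsto_const_nhds.sub hu).pow 2)
    have h2 : Tendsto (fun s : ℝ => -3 * s^2 / (α * (1+s)^2)) atTop (𝓝 (-3/α)) := by
      have : (-3 * ((1:ℝ) - 0)^2 / α) = -3/α := by norm_num
      rw [this] at h2'
      apply h2'.congr'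
      filter_upwards [eventually_gt_atTop 0] with s hs
      have h1s : (0:ℝ) < 1 + s := by linarith
      field_simp
      ring
    have hcomp := h2.comp hs3
    apply hcomp.congr'
    filter_upwards [eventually_gt_atTop 0] with x hx
    have ht : 0 < α * x := mul_pos hα hx
    have e62 : ((α*x)^((3:ℝ)/4))^2 = (α*x)^((3:ℝ)/2) := by
      rw [← Real.rpow_natCast ((α*x)^((3:ℝ)/4)) 2, ← Real.rpow_mul ht.le]
      norm_num
    rw [h𝓛 x hx]
    simp only [Function.comp]
    rw [← e62]
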